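/- Suppose γₙ → γ and γ̃ₙ → γ̃ in (C_f, ψ), with γₙ(T(γₙ)) = γ̃ₙ(0) and γ(T(γ)) = γ̃(0) so that all concatenations are defined. Then the concatenations γₙ ⊕ γ̃ₙ converge to γ ⊕ γ̃ in (C_f, ψ). -/

import Mathlib

open Filter Set

noncomputable section

/-- A finite-duration parameterized curve in `ℝ³`: a continuous function together with
its duration `T ≥ 0` (only the values on `[0, T]` are relevant). -/
structure FiniteCurve where
  T : ℝ
  hT : 0 ≤ T
  toFun : ℝ → EuclideanSpace ℝ (Fin 3)
  cont : Continuous toFun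

/-- The metric `ψ` on the space `C_f` of finite parameterized curves:
`ψ(γ₁,γ₂) = |T₁ − T₂| + max_{0 ≤ s ≤ 1} |γ₁(sT₁) − γ₂(sT₂)|`. -/
noncomputable def psiDist (γ₁ γ₂ : FiniteCurve) : ℝ :=
  |γ₁.T - γ₂.T| +
    ⨆ s : Set.Icc (0 : ℝ) 1, dist (γ₁.toFun ((s : ℝ) * γ₁.T)) (γ₂.toFun ((s : ℝ) * γ₂.T))

/-- The concatenation `γ₁ ⊕ γ₂` of two finite curves with `γ₁(T₁) = γ₂(0)`:
equal to `γ₁(t)` for `t ≤ T₁` and to `γ₂(t − T₁)` afterwards; it has duration `T₁ + T₂`. -/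
noncomputable def FiniteCurve.concat (γ₁ γ₂ : FiniteCurve)
    (h : γ₁.toFun γ₁.T = γ₂.toFun 0) : FiniteCurve where
  T := γ₁.T + γ₂.T
  hT := add_nonneg γ₁.hT γ₂.hT
  toFun := fun t => if t ≤ γ₁.T then γ₁.toFun t else γ₂.toFun (t - γ₁.T)
  cont := by
    refine Continuous.if_le γ₁.cont (γ₂.cont.comp (continuous_id.sub continuous_const))
      continuous_id continuous_const ?_
    intro t ht
    rw [ht, sub_self]
    exact h

/- ### Auxiliary lemmas -/

lemma psi_aux_exists_sigma (T t : ℝ) (h0 : 0 ≤ t) (h1 : t ≤ T) :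
    ∃ σ, 0 ≤ σ ∧ σ ≤ 1 ∧ σ * T = t := by
  rcases eq_or_lt_of_le (h0.trans h1) with hT | hT
  · exact ⟨0, le_refl 0, zero_le_one, by rw [zero_mul]; linarith⟩
  · exact ⟨t / T, div_nonneg h0 hT.le, (div_le_one hT).mpr h1, div_mul_cancel₀ t hT.ne'⟩

lemma psi_aux_abs_mul_le {x c d : ℝ} (hx0 : 0 ≤ x) (hx1 : x ≤ 1) (hc : |c| ≤ d) :
    |x * c| ≤ d := by
  rw [abs_mul, abs_of_nonneg hx0]
  calc x * |c| ≤ 1 * |c| := by nlinarith [abs_nonneg c]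
  _ = |c| := one_mul _
  _ ≤ d := hc

lemma psi_aux_bdd (a b : FiniteCurve) : BddAbove (Set.range fun s : Set.Icc (0:ℝ) 1 =>
    dist (a.toFun ((s : ℝ) * a.T)) (b.toFun ((s : ℝ) * b.T))) := by
  have hc : Continuous fun s : Set.Icc (0:ℝ) 1 =>
      dist (a.toFun ((s : ℝ) * a.T)) (b.toFun ((s : ℝ) * b.T)) :=
    (a.cont.comp (continuous_subtype_val.mul continuous_const)).dist
      (b.cont.comp (continuous_subtype_val.mul continuous_const))
  exact (isCompact_range hc).bddAbove

lemma psi_aux_dist_le (a b : FiniteCurve) {s : ℝ} (hs : s ∈ Set.Icc (0:ℝ) 1) :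
    dist (a.toFun (s * a.T)) (b.toFun (s * b.T)) ≤ psiDist a b := by
  have h1 := le_ciSup (psi_aux_bdd a b) (⟨s, hs⟩ : Set.Icc (0:ℝ) 1)
  have h2 : (0:ℝ) ≤ |a.T - b.T| := abs_nonneg _
  unfold psiDist
  exact le_add_of_nonneg_of_le h2 h1

lemma psi_aux_T_le (a b : FiniteCurve) : |a.T - b.T| ≤ psiDist a b :=
  le_add_of_nonneg_right (Real.iSup_nonneg fun _ => dist_nonneg)

lemma psiDist_nonneg (a b : FiniteCurve) : 0 ≤ psiDist a b :=
  add_nonneg (abs_nonneg _) (Real.iSup_nonneg fun _ => dist_nonneg)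

/-- Core pointwise estimate for the concatenation. -/
lemma psi_concat_pointwise (α β α' β' : FiniteCurve)
    (hc : α.toFun α.T = β.toFun 0) (hc' : α'.toFun α'.T = β'.toFun 0)
    (ε η : ℝ) (hη : 0 ≤ η)
    (hT1 : |α.T - α'.T| ≤ η) (hT2 : |β.T - β'.T| ≤ η)
    (hsα : ∀ s ∈ Set.Icc (0:ℝ) 1,
      dist (α.toFun (s * α.T)) (α'.toFun (s * α'.T)) ≤ ε)
    (hsβ : ∀ s ∈ Set.Icc (0:ℝ) 1,
      dist (β.toFun (s * β.T)) (β'.toFun (s * β'.T)) ≤ ε)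
    (hωα : ∀ u ∈ Set.Icc 0 α'.T, ∀ v ∈ Set.Icc 0 α'.T, |u - v| ≤ 4*η →
      dist (α'.toFun u) (α'.toFun v) ≤ ε)
    (hωβ : ∀ u ∈ Set.Icc 0 β'.T, ∀ v ∈ Set.Icc 0 β'.T, |u - v| ≤ 4*η →
      dist (β'.toFun u) (β'.toFun v) ≤ ε)
    (s : ℝ) (hs : s ∈ Set.Icc (0:ℝ) 1) :
    dist ((α.concat β hc).toFun (s * (α.concat β hc).T))
         ((α'.concat β' hc').toFun (s * (α'.concat β' hc').T)) ≤ 3 * ε := by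
  obtain ⟨hs0, hs1⟩ := hs
  have hε0 : 0 ≤ ε :=
    le_trans dist_nonneg (hωα 0 ⟨le_refl 0, α'.hT⟩ 0 ⟨le_refl 0, α'.hT⟩ (by
      simp only [sub_self, abs_zero]; positivity))
  obtain ⟨hT1a, hT1b⟩ := abs_le.mp hT1
  obtain ⟨hT2a, hT2b⟩ := abs_le.mp hT2
  set Ta := α.T with hTa; set Tb := β.T with hTb
  set Ta' := α'.T with hTa'; set Tb' := β'.T with hTb'
  have hTa0 := α.hT; have hTb0 := β.hT; have hTa'0 := α'.hT; have hTb'0 := β'.hT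
  set t := s * (Ta + Tb) with ht
  set t' := s * (Ta' + Tb') with ht'
  have ht0 : 0 ≤ t := mul_nonneg hs0 (by linarith)
  have ht'0 : 0 ≤ t' := mul_nonneg hs0 (by linarith)
  have htS : t ≤ Ta + Tb := by
    calc t ≤ 1 * (Ta + Tb) := by nlinarith
    _ = Ta + Tb := one_mul _
  have ht'S : t' ≤ Ta' + Tb' := by
    calc t' ≤ 1 * (Ta' + Tb') := by nlinarith
    _ = Ta' + Tb' := one_mul _
  -- |t - t'| ≤ 2η
  have htt : |t - t'| ≤ 2 * η := by
    have : t - t' = s * ((Ta + Tb) - (Ta' + Tb')) := by ring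
    rw [this]
    refine psi_aux_abs_mul_le hs0 hs1 ?_
    calc |Ta + Tb - (Ta' + Tb')| = |(Ta - Ta') + (Tb - Tb')| := by ring_nf
    _ ≤ |Ta - Ta'| + |Tb - Tb'| := abs_add_le _ _
    _ ≤ 2 * η := by linarith
  obtain ⟨htta, httb⟩ := abs_le.mp htt
  show dist (if t ≤ Ta then α.toFun t else β.toFun (t - Ta))
       (if t' ≤ Ta' then α'.toFun t' else β'.toFun (t' - Ta')) ≤ 3 * ε
  split_ifs with h1 h2 h2
  · -- Case 1 : t ≤ Ta, t' ≤ Ta'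
    obtain ⟨σ, hσ0, hσ1, hσT⟩ := psi_aux_exists_sigma Ta t ht0 h1
    have hgap : |σ * Ta' - t'| ≤ 4 * η := by
      have hid : σ * Ta' - t' = σ * (Ta' - Ta) + (t - t') := by linear_combination hσT
      rw [hid]
      calc |σ * (Ta' - Ta) + (t - t')| ≤ |σ * (Ta' - Ta)| + |t - t'| := abs_add_le _ _
      _ ≤ η + 2 * η := add_le_add (psi_aux_abs_mul_le hσ0 hσ1 (by rw [abs_sub_comm]; exact hT1)) htt
      _ ≤ 4 * η := by linarith
    calc dist (α.toFun t) (α'.toFun t')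
        ≤ dist (α.toFun (σ * Ta)) (α'.toFun (σ * Ta')) +
          dist (α'.toFun (σ * Ta')) (α'.toFun t') := by
          rw [hσT]; exact dist_triangle _ _ _
    _ ≤ ε + ε := add_le_add (hsα σ ⟨hσ0, hσ1⟩)
        (hωα _ ⟨mul_nonneg hσ0 hTa'0, mul_le_of_le_one_left hTa'0 hσ1⟩ _ ⟨ht'0, h2⟩ hgap)
    _ ≤ 3 * ε := by linarith
  · -- Case 3 : t ≤ Ta, ¬ t' ≤ Ta'
    push_neg at h2
    obtain ⟨σ, hσ0, hσ1, hσT⟩ := psi_aux_exists_sigma Ta t ht0 h1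
    have hgap1 : |σ * Ta' - Ta'| ≤ 4 * η := by
      have hid : σ * Ta' - Ta' = σ * (Ta' - Ta) + (t - Ta') := by linear_combination hσT
      rw [hid]
      calc |σ * (Ta' - Ta) + (t - Ta')| ≤ |σ * (Ta' - Ta)| + |t - Ta'| := abs_add_le _ _
      _ ≤ η + 3 * η := add_le_add (psi_aux_abs_mul_le hσ0 hσ1 (by rw [abs_sub_comm]; exact hT1))
          (abs_le.mpr ⟨by linarith, by linarith⟩)
      _ ≤ 4 * η := by linarith
    have hgap2 : |(0:ℝ) - (t' - Ta')| ≤ 4 * η := by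
      rw [zero_sub, abs_neg]
      exact abs_le.mpr ⟨by linarith, by linarith⟩
    calc dist (α.toFun t) (β'.toFun (t' - Ta'))
        ≤ dist (α.toFun (σ * Ta)) (α'.toFun (σ * Ta')) +
          dist (α'.toFun (σ * Ta')) (α'.toFun Ta') +
          dist (α'.toFun Ta') (β'.toFun (t' - Ta')) := by
          rw [hσT]; exact dist_triangle4 _ _ _ _
    _ = dist (α.toFun (σ * Ta)) (α'.toFun (σ * Ta')) +
          dist (α'.toFun (σ * Ta')) (α'.toFun Ta') +
          dist (β'.toFun 0) (β'.toFun (t' - Ta')) := by rw [hc']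
    _ ≤ ε + ε + ε := by
        refine add_le_add (add_le_add (hsα σ ⟨hσ0, hσ1⟩)
          (hωα _ ⟨mul_nonneg hσ0 hTa'0, mul_le_of_le_one_left hTa'0 hσ1⟩ _
            ⟨hTa'0, le_refl _⟩ hgap1)) ?_
        exact hωβ 0 ⟨le_refl 0, hTb'0⟩ _ ⟨by linarith, by linarith⟩ hgap2
    _ ≤ 3 * ε := by linarith
  · -- Case 4 : ¬ t ≤ Ta, t' ≤ Ta'
    push_neg at h1
    obtain ⟨σ, hσ0, hσ1, hσT⟩ := psi_aux_exists_sigma Tb (t - Ta) (by linarith) (by linarith)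
    have hgap1 : |σ * Tb' - 0| ≤ 4 * η := by
      have hid : σ * Tb' - 0 = σ * (Tb' - Tb) + (t - Ta) := by linear_combination hσT
      rw [hid]
      calc |σ * (Tb' - Tb) + (t - Ta)| ≤ |σ * (Tb' - Tb)| + |t - Ta| := abs_add_le _ _
      _ ≤ η + 3 * η := add_le_add (psi_aux_abs_mul_le hσ0 hσ1 (by rw [abs_sub_comm]; exact hT2))
          (abs_le.mpr ⟨by linarith, by linarith⟩)
      _ ≤ 4 * η := by linarith
    have hgap2 : |Ta' - t'| ≤ 4 * η := abs_le.mpr ⟨by linarith, by linarith⟩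
    calc dist (β.toFun (t - Ta)) (α'.toFun t')
        ≤ dist (β.toFun (σ * Tb)) (β'.toFun (σ * Tb')) +
          dist (β'.toFun (σ * Tb')) (β'.toFun 0) +
          dist (β'.toFun 0) (α'.toFun t') := by
          rw [hσT]; exact dist_triangle4 _ _ _ _
    _ = dist (β.toFun (σ * Tb)) (β'.toFun (σ * Tb')) +
          dist (β'.toFun (σ * Tb')) (β'.toFun 0) +
          dist (α'.toFun Ta') (α'.toFun t') := by rw [hc']
    _ ≤ ε + ε + ε := by
        refine add_le_add (add_le_add (hsβ σ ⟨hσ0, hσ1⟩)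
          (hωβ _ ⟨mul_nonneg hσ0 hTb'0, mul_le_of_le_one_left hTb'0 hσ1⟩ 0
            ⟨le_refl 0, hTb'0⟩ hgap1)) ?_
        exact hωα _ ⟨hTa'0, le_refl _⟩ _ ⟨ht'0, h2⟩ hgap2
    _ ≤ 3 * ε := by linarith
  · -- Case 2 : ¬ t ≤ Ta, ¬ t' ≤ Ta'
    push_neg at h1 h2
    obtain ⟨σ, hσ0, hσ1, hσT⟩ := psi_aux_exists_sigma Tb (t - Ta) (by linarith) (by linarith)
    have hgap : |σ * Tb' - (t' - Ta')| ≤ 4 * η := by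
      have hid : σ * Tb' - (t' - Ta') = σ * (Tb' - Tb) + (t - t') + (Ta' - Ta) := by
        linear_combination hσT
      rw [hid]
      calc |σ * (Tb' - Tb) + (t - t') + (Ta' - Ta)|
          ≤ |σ * (Tb' - Tb) + (t - t')| + |Ta' - Ta| := abs_add_le _ _
      _ ≤ (|σ * (Tb' - Tb)| + |t - t'|) + |Ta' - Ta| :=
          add_le_add_left (abs_add_le _ _) _
      _ ≤ (η + 2 * η) + η := by
          refine add_le_add (add_le_add (psi_aux_abs_mul_le hσ0 hσ1
            (by rw [abs_sub_comm]; exact hT2)) htt) ?_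
          rw [abs_sub_comm]; exact hT1
      _ ≤ 4 * η := by linarith
    calc dist (β.toFun (t - Ta)) (β'.toFun (t' - Ta'))
        ≤ dist (β.toFun (σ * Tb)) (β'.toFun (σ * Tb')) +
          dist (β'.toFun (σ * Tb')) (β'.toFun (t' - Ta')) := by
          rw [hσT]; exact dist_triangle _ _ _
    _ ≤ ε + ε := add_le_add (hsβ σ ⟨hσ0, hσ1⟩)
        (hωβ _ ⟨mul_nonneg hσ0 hTb'0, mul_le_of_le_one_left hTb'0 hσ1⟩ _
          ⟨by linarith, by linarith⟩ hgap)
    _ ≤ 3 * ε := by linarith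

/-- If `γₙ → γ` and `γ̃ₙ → γ̃` in `(C_f, ψ)`, with all concatenations defined,
then `γₙ ⊕ γ̃ₙ → γ ⊕ γ̃` in `(C_f, ψ)`. -/
theorem psi_tendsto_concat (γn γn' : ℕ → FiniteCurve) (γ γ' : FiniteCurve)
    (hn : ∀ n, (γn n).toFun (γn n).T = (γn' n).toFun 0)
    (hlim : γ.toFun γ.T = γ'.toFun 0)
    (h : Tendsto (fun n => psiDist (γn n) γ) atTop (nhds 0))
    (h' : Tendsto (fun n => psiDist (γn' n) γ') atTop (nhds 0)) :
    Tendsto (fun n => psiDist ((γn n).concat (γn' n) (hn n)) (γ.concat γ' hlim))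
      atTop (nhds 0) := by
  rw [NormedAddCommGroup.tendsto_nhds_zero]
  intro ε₀ hε₀
  -- uniform continuity of the limit curves on their domains
  obtain ⟨δ₁, hδ₁, hu₁⟩ := (Metric.uniformContinuousOn_iff.mp
    (isCompact_Icc.uniformContinuousOn_of_continuous (s := Set.Icc 0 γ.T)
      γ.cont.continuousOn)) (ε₀ / 6) (by linarith)
  obtain ⟨δ₂, hδ₂, hu₂⟩ := (Metric.uniformContinuousOn_iff.mp
    (isCompact_Icc.uniformContinuousOn_of_continuous (s := Set.Icc 0 γ'.T)
      γ'.cont.continuousOn)) (ε₀ / 6) (by linarith)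
  set η : ℝ := min (min (δ₁ / 5) (δ₂ / 5)) (ε₀ / 12) with hηdef
  have hη0 : 0 < η := lt_min (lt_min (by positivity) (by positivity)) (by positivity)
  have hηδ₁ : 4 * η < δ₁ := by
    have : η ≤ δ₁ / 5 := le_trans (min_le_left _ _) (min_le_left _ _)
    linarith
  have hηδ₂ : 4 * η < δ₂ := by
    have : η ≤ δ₂ / 5 := le_trans (min_le_left _ _) (min_le_right _ _)
    linarith
  have hηε : η ≤ ε₀ / 12 := min_le_right _ _
  have hpos : (0:ℝ) < min η (ε₀ / 6) := lt_min hη0 (by linarith)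
  filter_upwards [h.eventually_lt_const hpos, h'.eventually_lt_const hpos] with n hn1 hn2
  have hT1 : |(γn n).T - γ.T| ≤ η :=
    le_of_lt (lt_of_le_of_lt (psi_aux_T_le _ _) (hn1.trans_le (min_le_left _ _)))
  have hT2 : |(γn' n).T - γ'.T| ≤ η :=
    le_of_lt (lt_of_le_of_lt (psi_aux_T_le _ _) (hn2.trans_le (min_le_left _ _)))
  have hsα : ∀ s ∈ Set.Icc (0:ℝ) 1,
      dist ((γn n).toFun (s * (γn n).T)) (γ.toFun (s * γ.T)) ≤ ε₀ / 6 := fun s hs =>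
    le_of_lt (lt_of_le_of_lt (psi_aux_dist_le _ _ hs) (hn1.trans_le (min_le_right _ _)))
  have hsβ : ∀ s ∈ Set.Icc (0:ℝ) 1,
      dist ((γn' n).toFun (s * (γn' n).T)) (γ'.toFun (s * γ'.T)) ≤ ε₀ / 6 := fun s hs =>
    le_of_lt (lt_of_le_of_lt (psi_aux_dist_le _ _ hs) (hn2.trans_le (min_le_right _ _)))
  have hωα : ∀ u ∈ Set.Icc 0 γ.T, ∀ v ∈ Set.Icc 0 γ.T, |u - v| ≤ 4*η →
      dist (γ.toFun u) (γ.toFun v) ≤ ε₀ / 6 := by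
    intro u hu v hv huv
    exact le_of_lt (hu₁ u hu v hv (by rw [Real.dist_eq]; exact lt_of_le_of_lt huv hηδ₁))
  have hωβ : ∀ u ∈ Set.Icc 0 γ'.T, ∀ v ∈ Set.Icc 0 γ'.T, |u - v| ≤ 4*η →
      dist (γ'.toFun u) (γ'.toFun v) ≤ ε₀ / 6 := by
    intro u hu v hv huv
    exact le_of_lt (hu₂ u hu v hv (by rw [Real.dist_eq]; exact lt_of_le_of_lt huv hηδ₂))
  have hkey := psi_concat_pointwise (γn n) (γn' n) γ γ' (hn n) hlim (ε₀ / 6) η hη0.le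
    hT1 hT2 hsα hsβ hωα hωβ
  have hTbound : |((γn n).concat (γn' n) (hn n)).T - (γ.concat γ' hlim).T| ≤ 2 * η := by
    show |((γn n).T + (γn' n).T) - (γ.T + γ'.T)| ≤ 2 * η
    calc |((γn n).T + (γn' n).T) - (γ.T + γ'.T)|
        = |((γn n).T - γ.T) + ((γn' n).T - γ'.T)| := by ring_nf
    _ ≤ |(γn n).T - γ.T| + |(γn' n).T - γ'.T| := abs_add_le _ _
    _ ≤ 2 * η := by linarith
  have hsupbound : (⨆ s : Set.Icc (0:ℝ) 1,
      dist (((γn n).concat (γn' n) (hn n)).toFun ((s:ℝ) * ((γn n).concat (γn' n) (hn n)).T))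
           ((γ.concat γ' hlim).toFun ((s:ℝ) * (γ.concat γ' hlim).T))) ≤ 3 * (ε₀ / 6) := by
    refine Real.iSup_le (fun s => hkey (s : ℝ) s.2) (by linarith)
  have hfinal : psiDist ((γn n).concat (γn' n) (hn n)) (γ.concat γ' hlim) < ε₀ := by
    unfold psiDist
    have := hTbound
    linarith [hsupbound]
  rw [Real.norm_eq_abs, abs_of_nonneg (psiDist_nonneg _ _)]
  exact hfinal
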